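/- arXiv:0906.0101 — 2 statements merged into one kernel-verified Lean document; each statement's English description precedes it below -/
import Mathlib

section
/- Let G be a finitely generated group with unique roots (i.e., a^n = b^n with n ≠ 0 implies a = b). If G has a finite-index subgroup H that is conjugacy separable, then G is conjugacy separable. -/
/-- `G` is conjugacy separable: any two non-conjugate elements remain
non-conjugate in some finite quotient. -/
def ConjugacySeparable (G : Type) [Group G] : Prop :=
  ∀ g₁ g₂ : G, ¬ IsConj g₁ g₂ →
    ∃ (Q : Type) (_ : Group Q) (_ : Finite Q) (φ : G →* Q), ¬ IsConj (φ g₁) (φ g₂)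

/-- A finitely generated group with unique roots having a conjugacy separable
finite-index subgroup is conjugacy separable. -/
theorem stmt1 {G : Type} [Group G] (hfg : Group.FG G)
    (hur : ∀ (a b : G) (n : ℤ), n ≠ 0 → a ^ n = b ^ n → a = b)
    (H : Subgroup G) (hH : H.FiniteIndex) (hcs : ConjugacySeparable H) :
    ConjugacySeparable G := by
  classical
  intro g₁ g₂ hng
  -- N : normal core of H, a finite-index normal subgroup contained in H
  set N : Subgroup G := H.normalCore with hN
  haveI hNnorm : N.Normal := H.normalCore_normal
  haveI : N.FiniteIndex := Subgroup.finiteIndex_normalCore H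
  set n : ℕ := N.index with hn
  have hn0 : n ≠ 0 := Subgroup.FiniteIndex.index_ne_zero
  have hpowmem : ∀ g : G, g ^ n ∈ N := fun g => N.pow_index_mem g
  have hNH : N ≤ H := H.normalCore_le
  -- unique roots: conjugacy of n-th powers implies conjugacy
  have key : ∀ x : G, x * g₁ ^ n * x⁻¹ = g₂ ^ n → IsConj g₁ g₂ := by
    intro x hx
    have hx' : (x * g₁ * x⁻¹) ^ (n : ℤ) = g₂ ^ (n : ℤ) := by
      rw [zpow_natCast, zpow_natCast, conj_pow]
      simpa using hx
    exact isConj_iff.mpr ⟨x, hur _ _ (n : ℤ) (by exact_mod_cast hn0) hx'⟩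
  -- for each coset q of H, the conjugate t⁻¹ g₂ⁿ t is not H-conjugate to g₁ⁿ
  have hmem1 : g₁ ^ n ∈ H := hNH (hpowmem g₁)
  have hmem2 : ∀ q : G ⧸ H, q.out⁻¹ * g₂ ^ n * q.out ∈ H := fun q =>
    hNH (hNnorm.conj_mem' _ (hpowmem g₂) _)
  have hnc : ∀ q : G ⧸ H,
      ¬ IsConj (⟨g₁ ^ n, hmem1⟩ : H) (⟨q.out⁻¹ * g₂ ^ n * q.out, hmem2 q⟩ : H) := by
    intro q hc
    obtain ⟨c, hc⟩ := isConj_iff.mp hc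
    apply hng
    have hc' : (c : G) * g₁ ^ n * (c : G)⁻¹ = q.out⁻¹ * g₂ ^ n * q.out := by
      have := Subtype.ext_iff.mp hc
      push_cast at this
      exact this
    apply key (q.out * (c : G))
    calc q.out * (c:G) * g₁ ^ n * (q.out * (c:G))⁻¹
        = q.out * ((c:G) * g₁ ^ n * (c:G)⁻¹) * q.out⁻¹ := by group
      _ = q.out * (q.out⁻¹ * g₂ ^ n * q.out) * q.out⁻¹ := by rw [hc']
      _ = g₂ ^ n := by group
  -- choose separating finite quotients of H
  choose Q hQgrp hQfin φ hφ using fun q : G ⧸ H => hcs _ _ (hnc q)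
  letI := hQgrp; letI := hQfin
  haveI : Finite (G ⧸ H) := Subgroup.finite_quotient_of_finiteIndex (H := H)
  -- combine them
  set Φ : H →* (∀ q : G ⧸ H, Q q) := Pi.monoidHom φ with hΦ
  haveI : Finite Φ.range := Subtype.finite
  haveI : Φ.ker.FiniteIndex := Subgroup.finiteIndex_ker Φ
  set K : Subgroup G := Φ.ker.map H.subtype with hK
  haveI : K.FiniteIndex := by
    constructor
    rw [hK, Subgroup.index_map_subtype]
    exact mul_ne_zero Subgroup.FiniteIndex.index_ne_zero Subgroup.FiniteIndex.index_ne_zero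
  set M : Subgroup G := K.normalCore with hM
  haveI hMnorm : M.Normal := K.normalCore_normal
  haveI : M.FiniteIndex := Subgroup.finiteIndex_normalCore K
  haveI : Finite (G ⧸ M) := Subgroup.finite_quotient_of_finiteIndex (H := M)
  refine ⟨G ⧸ M, inferInstance, inferInstance, QuotientGroup.mk' M, ?_⟩
  intro hic
  obtain ⟨c, hc⟩ := isConj_iff.mp hic
  obtain ⟨x, rfl⟩ := QuotientGroup.mk_surjective c
  have hc1 : (QuotientGroup.mk (x * g₁ * x⁻¹) : G ⧸ M) = QuotientGroup.mk g₂ := by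
    simpa using hc
  have hc' : (QuotientGroup.mk (x * g₁ ^ n * x⁻¹) : G ⧸ M) = QuotientGroup.mk (g₂ ^ n) := by
    calc (QuotientGroup.mk (x * g₁ ^ n * x⁻¹) : G ⧸ M)
        = (QuotientGroup.mk ((x * g₁ * x⁻¹) ^ n) : G ⧸ M) := by rw [conj_pow]
      _ = (QuotientGroup.mk (x * g₁ * x⁻¹) : G ⧸ M) ^ n := rfl
      _ = (QuotientGroup.mk g₂ : G ⧸ M) ^ n := by rw [hc1]
      _ = QuotientGroup.mk (g₂ ^ n) := rfl
  have hd : (x * g₁ ^ n * x⁻¹)⁻¹ * g₂ ^ n ∈ M := QuotientGroup.eq.mp hc'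
  -- decompose x = t * h with t a coset representative and h ∈ H
  set q : G ⧸ H := QuotientGroup.mk x with hq
  set t : G := q.out with ht
  have hth : (QuotientGroup.mk t : G ⧸ H) = QuotientGroup.mk x := QuotientGroup.out_eq' q
  have hhH : t⁻¹ * x ∈ H := QuotientGroup.eq.mp hth
  set h : G := t⁻¹ * x with hh
  have hx : x = t * h := by rw [hh]; group
  -- conjugate the relation by t⁻¹
  have hd2 : t⁻¹ * ((x * g₁ ^ n * x⁻¹)⁻¹ * g₂ ^ n) * t ∈ M := hMnorm.conj_mem' _ hd t
  have hd3 : (h * g₁ ^ n * h⁻¹)⁻¹ * (t⁻¹ * g₂ ^ n * t) ∈ M := by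
    have heq : (h * g₁ ^ n * h⁻¹)⁻¹ * (t⁻¹ * g₂ ^ n * t)
        = t⁻¹ * ((x * g₁ ^ n * x⁻¹)⁻¹ * g₂ ^ n) * t := by
      rw [hx]; group
    rw [heq]; exact hd2
  have hd4 : (h * g₁ ^ n * h⁻¹)⁻¹ * (t⁻¹ * g₂ ^ n * t) ∈ K := K.normalCore_le hd3
  -- interpret inside H
  have hmemh : h ∈ H := hhH
  obtain ⟨z, hzker, hzval⟩ := hd4
  set a : H := (⟨h, hmemh⟩ : H) * ⟨g₁ ^ n, hmem1⟩ * (⟨h, hmemh⟩ : H)⁻¹ with hadef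
  set b : H := (⟨t⁻¹ * g₂ ^ n * t, hmem2 q⟩ : H) with hbdef
  have hzeq : z = a⁻¹ * b := by
    apply Subtype.ext
    simpa [hadef, hbdef, mul_assoc] using hzval
  rw [hzeq] at hzker
  have hΦab : Φ a = Φ b := by
    have h1 : Φ (a⁻¹ * b) = 1 := hzker
    rw [map_mul, map_inv] at h1
    exact inv_mul_eq_one.mp h1
  have hqab : φ q a = φ q b := congrFun hΦab q
  apply hφ q
  apply isConj_iff.mpr
  refine ⟨φ q (⟨h, hmemh⟩ : H), ?_⟩
  have hexp : φ q a = φ q (⟨h, hmemh⟩ : H) * φ q (⟨g₁ ^ n, hmem1⟩ : H)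
      * (φ q (⟨h, hmemh⟩ : H))⁻¹ := by
    rw [hadef, map_mul, map_mul, map_inv]
  rw [← hexp]
  exact hqab
end

section
/- In a free group F, if a^n = b^n for elements a, b ∈ F and a nonzero integer n, then a = b. -/
namespace FreeGroupUR
open FreeGroup

variable {σ : Type*}

lemma red_cons [DecidableEq σ] (p : σ × Bool) {L : List (σ × Bool)} (hL : reduce L = L)
    (hh : ∀ q, L.head? = some q → ¬(p.1 = q.1 ∧ p.2 = !q.2)) :
    reduce (p :: L) = p :: L := by
  rw [FreeGroup.reduce.cons, hL]
  cases L with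
  | nil => rfl
  | cons q t => exact if_neg (hh q rfl)

lemma invRev_concat (L : List (σ × Bool)) (p : σ × Bool) :
    invRev (L ++ [p]) = (p.1, !p.2) :: invRev L := by
  simp [invRev]

lemma invRev_head? (L : List (σ × Bool)) :
    (invRev L).head? = L.getLast?.map (fun q => (q.1, !q.2)) := by
  simp [invRev, List.head?_reverse, List.getLast?_map]

lemma invRev_getLast? (L : List (σ × Bool)) :
    (invRev L).getLast? = L.head?.map (fun q => (q.1, !q.2)) := by
  simp [invRev, List.getLast?_reverse, List.head?_map]

lemma red_concat [DecidableEq σ] (p : σ × Bool) {L : List (σ × Bool)} (hL : reduce L = L)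
    (hh : ∀ q, L.getLast? = some q → ¬(p.1 = q.1 ∧ (!p.2) = q.2)) :
    reduce (L ++ [p]) = L ++ [p] := by
  have h1 : reduce (invRev L) = invRev L := by
    rw [FreeGroup.reduce_invRev, hL]
  have h2 : reduce ((p.1, !p.2) :: invRev L) = (p.1, !p.2) :: invRev L := by
    apply red_cons _ h1
    intro q hq
    rw [invRev_head?] at hq
    rcases Option.map_eq_some_iff.mp hq with ⟨r, hr, rfl⟩
    intro ⟨e1, e2⟩
    exact hh r hr ⟨e1, by simpa using e2⟩
  have h3 : invRev (L ++ [p]) = (p.1, !p.2) :: invRev L := invRev_concat L p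
  have h4 : reduce (invRev (L ++ [p])) = invRev (L ++ [p]) := by rw [h3, h2]
  rw [FreeGroup.reduce_invRev] at h4
  exact FreeGroup.invRev_involutive.injective (by simpa using h4)

lemma cons_eq_concat {p : σ × Bool} :
    ∀ {L : List (σ × Bool)}, p :: L = L ++ [p] → L = List.replicate L.length p
  | [], _ => rfl
  | q :: t, h => by
    simp only [List.cons_append, List.cons.injEq] at h
    obtain ⟨rfl, h⟩ := h
    have := cons_eq_concat h
    simp [List.replicate_succ, ← this]

lemma of_eq_mk (g : σ) : FreeGroup.of g = FreeGroup.mk [(g, true)] := rfl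

lemma central_word [DecidableEq σ] {z : FreeGroup σ} (g : σ)
    (hc : FreeGroup.of g * z = z * FreeGroup.of g)
    (h1 : z.toWord.head? ≠ some (g, false))
    (h2 : z.toWord.getLast? ≠ some (g, false)) :
    z.toWord = List.replicate z.toWord.length (g, true) := by
  have hred : reduce z.toWord = z.toWord := FreeGroup.reduce_toWord z
  have hmk : FreeGroup.mk ((g, true) :: z.toWord) = FreeGroup.mk (z.toWord ++ [(g, true)]) := by
    have h0 := hc
    rw [of_eq_mk, ← FreeGroup.mk_toWord (x := z), FreeGroup.mul_mk, FreeGroup.mul_mk] at h0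
    simpa using h0
  have e1 : reduce ((g, true) :: z.toWord) = reduce (z.toWord ++ [(g, true)]) :=
    FreeGroup.reduce.sound hmk
  rw [red_cons _ hred ?hc1, red_concat _ hred ?hc2] at e1
  case hc1 =>
    rintro ⟨q1, q2⟩ hq ⟨rfl, e2⟩
    exact h1 (by rw [hq]; simpa using e2.symm)
  case hc2 =>
    rintro ⟨q1, q2⟩ hq ⟨rfl, e2⟩
    exact h2 (by rw [hq]; simpa using e2.symm)
  exact cons_eq_concat e1

lemma no_good [DecidableEq σ] {x y : σ} (hxy : x ≠ y) {z : FreeGroup σ}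
    (hz : ∀ u, Commute z u) (hne : z ≠ 1) (g : σ)
    (h1 : z.toWord.head? ≠ some (g, false))
    (h2 : z.toWord.getLast? ≠ some (g, false)) : False := by
  have hw := central_word g ((hz (FreeGroup.of g)).symm.eq) h1 h2
  obtain ⟨m, hm⟩ : ∃ m, z.toWord.length = m + 1 := by
    have hpos : z.toWord.length ≠ 0 := fun h0 => hne
      (FreeGroup.toWord_eq_nil_iff.mp (List.length_eq_zero_iff.mp h0))
    exact ⟨z.toWord.length - 1, by omega⟩
  rw [hm] at hw
  set h : σ := if g = x then y else x with hh
  have hgh : h ≠ g := by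
    rcases eq_or_ne g x with rfl | hgx
    · rw [hh, if_pos rfl]
      exact Ne.symm hxy
    · rw [hh, if_neg hgx]
      exact Ne.symm hgx
  have hw2 := central_word h ((hz (FreeGroup.of h)).symm.eq) ?_ ?_
  · rw [hm, hw] at hw2
    have heq : ((g, true) : σ × Bool) = (h, true) := by
      have := congrArg List.head? hw2
      simpa [List.replicate_succ] using this
    exact hgh (congrArg Prod.fst heq).symm
  · rw [hw]
    simp [List.replicate_succ]
  · rw [hw]
    intro hq
    rw [List.getLast?_replicate] at hq
    simp at hq

lemma center_trivial [DecidableEq σ] {x y : σ} (hxy : x ≠ y) {z : FreeGroup σ}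
    (hz : ∀ u, Commute z u) : z = 1 := by
  by_contra hne
  have badx : z.toWord.head? = some (x, false) ∨ z.toWord.getLast? = some (x, false) := by
    by_contra hc
    push_neg at hc
    exact no_good hxy hz hne x hc.1 hc.2
  have bady : z.toWord.head? = some (y, false) ∨ z.toWord.getLast? = some (y, false) := by
    by_contra hc
    push_neg at hc
    exact no_good hxy hz hne y hc.1 hc.2
  have hzi : ∀ u, Commute z⁻¹ u := fun u => (hz u).inv_left
  have hnei : z⁻¹ ≠ 1 := by simpa using hne
  have hinv : z⁻¹.toWord = invRev z.toWord := FreeGroup.toWord_inv z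
  have hfalse : (∃ q1, z.toWord.head? = some (q1, false)) ∧
      (∃ q2, z.toWord.getLast? = some (q2, false)) := by
    rcases badx with h1 | h1 <;> rcases bady with h2 | h2
    · rw [h1] at h2
      have : x = y := by simpa using h2
      exact (hxy this).elim
    · exact ⟨⟨x, h1⟩, ⟨y, h2⟩⟩
    · exact ⟨⟨y, h2⟩, ⟨x, h1⟩⟩
    · rw [h1] at h2
      have : x = y := by simpa using h2
      exact (hxy this).elim
  obtain ⟨⟨q1, hq1⟩, ⟨q2, hq2⟩⟩ := hfalse
  apply no_good hxy hzi hnei x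
  · rw [hinv, invRev_head?, hq2]
    simp
  · rw [hinv, invRev_getLast?, hq1]
    simp

lemma exists_zpow (x0 : σ) (hσ : ∀ s t : σ, s = t) (w : FreeGroup σ) :
    ∃ k : ℤ, w = FreeGroup.of x0 ^ k := by
  induction w using FreeGroup.induction_on with
  | C1 => exact ⟨0, by simp⟩
  | of s => exact ⟨1, by rw [hσ s x0]; simp⟩
  | inv_of s ih =>
    obtain ⟨k, hk⟩ := ih
    exact ⟨-k, by rw [hk, zpow_neg]⟩
  | mul u v hu hv =>
    obtain ⟨k, hk⟩ := hu
    obtain ⟨l, hl⟩ := hv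
    exact ⟨k + l, by rw [hk, hl, zpow_add]⟩

lemma of_zpow_injective (x0 : σ) {p q : ℤ}
    (h : FreeGroup.of x0 ^ p = FreeGroup.of x0 ^ q) : p = q := by
  have hφ := congrArg (FreeGroup.lift (fun _ : σ => Multiplicative.ofAdd (1 : ℤ))) h
  simp only [map_zpow, FreeGroup.lift_apply_of] at hφ
  have := congrArg Multiplicative.toAdd hφ
  simpa using this

lemma pow_case_subsingleton (hσ : ∀ s t : σ, s = t) {u v : FreeGroup σ} {n : ℤ}
    (hn : n ≠ 0) (h : u ^ n = v ^ n) : u = v := by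
  rcases isEmpty_or_nonempty σ with hE | ⟨⟨x0⟩⟩
  · exact Subsingleton.elim u v
  · obtain ⟨p, hp⟩ := exists_zpow x0 hσ u
    obtain ⟨q, hq⟩ := exists_zpow x0 hσ v
    rw [hp, hq, ← zpow_mul, ← zpow_mul] at h
    have := of_zpow_injective x0 h
    have hpq : p = q := by
      have := mul_right_cancel₀ hn this
      exact this
    rw [hp, hq, hpq]

lemma of_mul_of_ne [DecidableEq σ] {x y : σ} (hxy : x ≠ y) :
    FreeGroup.of x * FreeGroup.of y ≠ FreeGroup.of y * FreeGroup.of x := by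
  intro h
  have h1 : FreeGroup.mk [(x, true), (y, true)] = FreeGroup.mk [(y, true), (x, true)] := by
    rw [of_eq_mk, of_eq_mk, FreeGroup.mul_mk] at h
    simpa using h
  have h2 := FreeGroup.reduce.sound h1
  have hr : ∀ s t : σ, s ≠ t → reduce [(s, true), (t, true)] = [(s, true), (t, true)] := by
    intro s t hst
    apply red_cons _ (FreeGroup.reduce_singleton _)
    rintro q hq ⟨e1, _⟩
    exact hst (by simpa using (e1.trans (congrArg Prod.fst (Option.some.inj hq).symm)))
  rw [hr x y hxy, hr y x hxy.symm] at h2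
  injection h2 with ha _
  exact hxy (congrArg Prod.fst ha)

lemma transfer_central {G : Type*} [Group G] (e : G ≃* FreeGroup σ) {z : G}
    (hz : ∀ u : G, Commute z u) : ∀ w : FreeGroup σ, Commute (e z) w := by
  intro w
  have h1 : z * e.symm w = e.symm w * z := (hz (e.symm w)).eq
  have h2 : e z * w = w * e z := by
    conv_lhs => rw [← e.apply_symm_apply w]
    conv_rhs => rw [← e.apply_symm_apply w]
    rw [← _root_.map_mul, ← _root_.map_mul, h1]
  exact h2

lemma torsionfree {α : Type} (u : FreeGroup α) (n : ℤ) (hn : n ≠ 0) (h : u ^ n = 1) :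
    u = 1 := by
  set K := Subgroup.zpowers u with hK
  have hu : u ∈ K := Subgroup.mem_zpowers u
  have hcomm : ∀ p q : K, p * q = q * p := by
    rintro ⟨p, kp, rfl⟩ ⟨q, kq, rfl⟩
    ext
    push_cast
    rw [← zpow_add, ← zpow_add, add_comm]
  let e := IsFreeGroup.toFreeGroup K
  by_cases hσ : ∀ s t : IsFreeGroup.Generators K, s = t
  · have hun : (⟨u, hu⟩ : K) ^ n = 1 := by
      ext
      push_cast
      exact h
    have : (e ⟨u, hu⟩) ^ n = (1 : FreeGroup (IsFreeGroup.Generators K)) ^ n := by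
      rw [one_zpow, ← map_zpow, hun, _root_.map_one]
    have := pow_case_subsingleton hσ hn this
    have : (⟨u, hu⟩ : K) = 1 := e.injective (by rw [this, _root_.map_one])
    exact congrArg Subtype.val this
  · push_neg at hσ
    obtain ⟨s, t, hst⟩ := hσ
    exfalso
    haveI : DecidableEq (IsFreeGroup.Generators K) := Classical.decEq _
    apply of_mul_of_ne hst
    calc FreeGroup.of s * FreeGroup.of t
        = e (e.symm (FreeGroup.of s) * e.symm (FreeGroup.of t)) := by
          rw [_root_.map_mul, e.apply_symm_apply, e.apply_symm_apply]
      _ = e (e.symm (FreeGroup.of t) * e.symm (FreeGroup.of s)) := by rw [hcomm]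
      _ = FreeGroup.of t * FreeGroup.of s := by
          rw [_root_.map_mul, e.apply_symm_apply, e.apply_symm_apply]

end FreeGroupUR

open FreeGroupUR in
/-- Free groups have unique roots. -/
theorem stmt12 {α : Type} (a b : FreeGroup α) (n : ℤ) (hn : n ≠ 0)
    (h : a ^ n = b ^ n) : a = b := by
  set H := Subgroup.closure ({a, b} : Set (FreeGroup α)) with hH
  have ha : a ∈ H := Subgroup.subset_closure (by simp)
  have hb : b ∈ H := Subgroup.subset_closure (by simp)
  let e := IsFreeGroup.toFreeGroup H
  haveI : DecidableEq (IsFreeGroup.Generators ↥H) := Classical.decEq _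
  by_cases hσ : ∀ s t : IsFreeGroup.Generators H, s = t
  · have hAB : (⟨a, ha⟩ : H) ^ n = (⟨b, hb⟩ : H) ^ n := by
      ext
      push_cast
      exact h
    have : (e ⟨a, ha⟩) ^ n = (e ⟨b, hb⟩) ^ n := by
      rw [← map_zpow, ← map_zpow, hAB]
    have := e.injective (pow_case_subsingleton hσ hn this)
    exact congrArg Subtype.val this
  · push_neg at hσ
    obtain ⟨s, t, hst⟩ := hσ
    -- a ^ n is central in H
    have hcen : ∀ g ∈ H, Commute (a ^ n) g := by
      intro g hg
      induction hg using Subgroup.closure_induction with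
      | mem g hg =>
        rcases hg with rfl | rfl
        · exact (Commute.refl g).zpow_left n
        · rw [h]; exact (Commute.refl g).zpow_left n
      | one => exact Commute.one_right _
      | mul g g' _ _ hg hg' => exact hg.mul_right hg'
      | inv g _ hg => exact hg.inv_right
    have han : a ^ n ∈ H := (Subgroup.zpow_mem H ha n)
    have hcenH : ∀ w : H, Commute (⟨a ^ n, han⟩ : H) w := by
      rintro ⟨w, hw⟩
      have := hcen w hw
      unfold Commute SemiconjBy at this ⊢
      ext
      push_cast
      exact this
    have hz1 : e ⟨a ^ n, han⟩ = 1 :=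
      center_trivial hst (transfer_central e hcenH)
    have hz : (⟨a ^ n, han⟩ : H) = 1 := e.injective (by rw [hz1, _root_.map_one])
    have han1 : a ^ n = 1 := congrArg Subtype.val hz
    have hbn1 : b ^ n = 1 := h ▸ han1
    rw [torsionfree a n hn han1, torsionfree b n hn hbn1]
end
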